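/- arXiv:2412.01660 — 2 statements merged into one kernel-verified Lean document; each statement's English description precedes it below -/
import Mathlib

section
/- (Voronoi meshes are omnidirectionally acyclic.) Let d ≥ 1, let ι be a finite index set, let v : ι → ℝ^d be an injective family of points (Voronoi centres), and let ω ∈ ℝ^d be any flow direction. Define the directed dual relation E on ι by: E i j holds if and only if i ≠ j, the closures of the Voronoi cells T_i and T_j intersect (i.e. the cells are neighbours sharing a boundary), and ⟪ω, v_j − v_i⟫ > 0 (i.e. T_i is upwind of T_j with respect to ω). Then E has no directed cycle: there is no integer m ≥ 1 and no function f : ℕ → ι with f(m) = f(0) such that E (f(k)) (f(k+1)) holds for every k < m. -/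
/-- The Voronoi cell of index `i`: points strictly closer to `v i` than to all other centres. -/
def voronoiCell {d : ℕ} {ι : Type*} (v : ι → EuclideanSpace ℝ (Fin d)) (i : ι) :
    Set (EuclideanSpace ℝ (Fin d)) :=
  {x | ∀ j, j ≠ i → dist x (v i) < dist x (v j)}

/-- Voronoi meshes are omnidirectionally acyclic: for any flow direction `ω`, the
directed dual relation of a Voronoi tessellation has no directed cycle. -/
theorem voronoi_directed_dual_acyclic
    (d : ℕ) (hd : 1 ≤ d) (ι : Type*) [Finite ι]
    (v : ι → EuclideanSpace ℝ (Fin d)) (hv : Function.Injective v)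
    (ω : EuclideanSpace ℝ (Fin d))
    (E : ι → ι → Prop)
    (hE : ∀ i j, E i j ↔ i ≠ j ∧
      (closure (voronoiCell v i) ∩ closure (voronoiCell v j)).Nonempty ∧
      0 < (inner ℝ ω (v j - v i) : ℝ)) :
    ¬ ∃ (m : ℕ) (f : ℕ → ι), 1 ≤ m ∧ f m = f 0 ∧ ∀ k < m, E (f k) (f (k + 1)) := by
  rintro ⟨m, f, hm, hcyc, hstep⟩
  have key : ∀ k < m, (inner ℝ ω (v (f k)) : ℝ) < inner ℝ ω (v (f (k + 1))) := by
    intro k hk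
    have h := ((hE _ _).mp (hstep k hk)).2.2
    rw [inner_sub_right] at h
    linarith
  have mono : ∀ k ≤ m, (inner ℝ ω (v (f 0)) : ℝ) ≤ inner ℝ ω (v (f k)) := by
    intro k hk
    induction k with
    | zero => exact le_refl _
    | succ n ih =>
      exact le_of_lt (lt_of_le_of_lt (ih (Nat.le_of_succ_le hk))
        (key n (Nat.lt_of_succ_le hk)))
  obtain ⟨n, rfl⟩ : ∃ n, m = n + 1 := ⟨m - 1, (Nat.succ_pred_eq_of_pos hm).symm⟩
  have h1 := mono n (Nat.le_succ n)
  have h2 := key n (Nat.lt_succ_self n)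
  rw [hcyc] at h2
  linarith
end

section
/- (Subdomain sweeps.) Let d ≥ 1, let ι be a finite index set, let v : ι → ℝ^d be an injective family of Voronoi centres, let ω ∈ ℝ^d, and let S ⊆ ι be any subset of indices. Define the directed dual relation E on ι by: E i j holds if and only if i ≠ j, the closures of the Voronoi cells T_i and T_j intersect, and ⟪ω, v_j − v_i⟫ > 0. Then the restriction of E to S admits a topological sort: there exists a strict linear order < on S such that for all i, j ∈ S, E i j implies i < j. In particular, sweeping is possible on any subdomain consisting of a subset of the cells of a Voronoi tessellation, even when some Voronoi centres lie outside the subdomain. -/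
/-- Subdomain sweeps: the restriction of the directed dual relation to any subset of
the cells of a Voronoi tessellation admits a topological sort. -/
theorem voronoi_subdomain_topological_sort
    (d : ℕ) (hd : 1 ≤ d) (ι : Type*) [Finite ι]
    (v : ι → EuclideanSpace ℝ (Fin d)) (hv : Function.Injective v)
    (ω : EuclideanSpace ℝ (Fin d)) (S : Set ι)
    (E : ι → ι → Prop)
    (hE : ∀ i j, E i j ↔ i ≠ j ∧
      (closure (voronoiCell v i) ∩ closure (voronoiCell v j)).Nonempty ∧
      0 < (inner ℝ ω (v j - v i) : ℝ)) :
    ∃ _lin : LinearOrder S, ∀ i j : S, E i j → i < j := by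
  classical
  letI : LinearOrder ι := linearOrderOfSTO WellOrderingRel
  set g : S → ℝ ×ₗ ι := fun i => toLex ((inner ℝ ω (v i) : ℝ), (i : ι)) with hg
  have hginj : Function.Injective g := by
    intro a b hab
    have : ((a : ι)) = (b : ι) := congrArg (fun p => (ofLex p).2) hab
    exact Subtype.ext this
  refine ⟨LinearOrder.lift' g hginj, ?_⟩
  intro i j hij
  have h := ((hE i j).mp hij).2.2
  rw [inner_sub_right] at h
  have hlt : g i < g j := (Prod.Lex.toLex_lt_toLex (x := ((inner ℝ ω (v i) : ℝ), (i:ι))) (y := ((inner ℝ ω (v j) : ℝ), (j:ι)))).mpr (Or.inl (by linarith))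
  exact hlt
end
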